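/- Let (ω_j)_{j∈E₊} be complex numbers with only finitely many nonzero, and set Ω = Σ_{j∈E₊} (ω_j/j)·Λ_{−j} ∈ 𝔤. Then for every k ∈ ℤ: (i) (ad_Ω)³(B_k) = 0, so e^{ad_Ω}(B_k) := B_k + [Ω, B_k] + (1/2)·[Ω, [Ω, B_k]] is a well-defined element of 𝔤; (ii) e^{ad_Ω}(B_k) = d_k − (1/N)·Σ_{i∈E₊} ( ω_i·Λ_{Nk−i} + i·t_i·Λ_{Nk+i} ) + ( (1/(2N))·Σ_{i,j∈E₊, i+j=Nk} ω_i·ω_j + (1/N)·Σ_{i∈E₊, i+Nk∈E₊} i·t_i·ω_{i+Nk} + (1/(2N))·Σ_{i,j∈E₊, i+j=−Nk} i·j·t_i·t_j )·c. -/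

import Mathlib

/-!
Setup as in the paper: `E ⊆ ℤ` with `E = -E`, `E ∩ Nℤ = ∅`, `E + N ⊆ E`; a
ℂ-Lie algebra `𝔤` with central `c`, Heisenberg generators `Λ_j` (`j ∈ E`) with
`[Λ_i, Λ_j] = i·δ_{i,-j}·c`, Virasoro elements `d_k` with
`[d_k, Λ_j] = -(j/N)·Λ_{j+Nk}`, `[d_k, d_l] = (k-l)·d_{k+l}`; finitely supported
scalars `(t_i)`, and
`B_k = d_k - (1/N)·Σ_{i∈E₊} i·t_i·Λ_{i+Nk} + (1/(2N))·(Σ_{i,j∈E₊, i+j=-Nk} i·j·t_i·t_j)·c`.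
Given finitely supported scalars `(ω_j)`, set `Ω = Σ_{j∈E₊} (ω_j/j)·Λ_{-j}`.
All locally finite sums are formalized via `finsum`.
-/

noncomputable section


set_option maxHeartbeats 1000000

private theorem my_lie_sum {L : Type*} [LieRing L] {ι : Type*} (x : L) (s : Finset ι)
    (f : ι → L) : ⁅x, ∑ i ∈ s, f i⁆ = ∑ i ∈ s, ⁅x, f i⁆ := by
  classical
  induction s using Finset.induction with
  | empty => simp
  | @insert a s h ih => simp [Finset.sum_insert h, ih]

private theorem my_sum_lie {L : Type*} [LieRing L] {ι : Type*} (s : Finset ι)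
    (f : ι → L) (x : L) : ⁅∑ i ∈ s, f i, x⁆ = ∑ i ∈ s, ⁅f i, x⁆ := by
  classical
  induction s using Finset.induction with
  | empty => simp
  | @insert a s h ih => simp [Finset.sum_insert h, ih]

private theorem my_finsum_eq_sum {ι M : Type*} [AddCommMonoid M] (f : ι → M) {s : Set ι}
    {F : Finset ι} (h : ∀ x, f x ≠ 0 → (x ∈ s ↔ x ∈ F)) :
    ∑ᶠ i ∈ s, f i = ∑ i ∈ F, f i := by
  apply finsum_mem_eq_sum_of_inter_support_eq
  ext x
  simp only [Set.mem_inter_iff, Finset.coe_sort_coe, Finset.mem_coe, Function.mem_support]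
  exact ⟨fun ⟨h1, h2⟩ => ⟨(h x h2).1 h1, h2⟩, fun ⟨h1, h2⟩ => ⟨(h x h2).2 h1, h2⟩⟩

private theorem my_sum_neg {ι M : Type*} [AddCommGroup M] (s : Finset ι) (f : ι → M) :
    ∑ i ∈ s, -f i = -∑ i ∈ s, f i := by simp


/-- The element `B_k`. -/
noncomputable def Bel (N : ℕ) (E : Set ℤ) {L : Type*} [LieRing L] [LieAlgebra ℂ L]
    (c : L) (Lam : ℤ → L) (d : ℤ → L) (t : ℤ → ℂ) (k : ℤ) : L :=
  d k - (N : ℂ)⁻¹ • (∑ᶠ i ∈ {i : ℤ | i ∈ E ∧ 0 < i}, ((i : ℂ) * t i) • Lam (i + (N : ℤ) * k))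
    + ((2 * (N : ℂ))⁻¹ *
        ∑ᶠ p ∈ {p : ℤ × ℤ | (p.1 ∈ E ∧ 0 < p.1) ∧ (p.2 ∈ E ∧ 0 < p.2)
            ∧ p.1 + p.2 = -((N : ℤ) * k)},
          (p.1 : ℂ) * (p.2 : ℂ) * t p.1 * t p.2) • c

/-- The element `Ω = Σ_{j∈E₊} (ω_j/j)·Λ_{-j}`. -/
noncomputable def OmEl (E : Set ℤ) {L : Type*} [LieRing L] [LieAlgebra ℂ L]
    (Lam : ℤ → L) (w : ℤ → ℂ) : L :=
  ∑ᶠ j ∈ {j : ℤ | j ∈ E ∧ 0 < j}, (w j / (j : ℂ)) • Lam (-j)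

/-- With `Ω = Σ_{j∈E₊} (ω_j/j)·Λ_{-j}`, for every `k ∈ ℤ`:
(i) `(ad_Ω)³(B_k) = 0`, so `e^{ad_Ω}(B_k) = B_k + [Ω,B_k] + (1/2)[Ω,[Ω,B_k]]` is
well defined; and (ii)
`e^{ad_Ω}(B_k) = d_k - (1/N)·Σ_{i∈E₊}(ω_i·Λ_{Nk-i} + i·t_i·Λ_{Nk+i})
  + ((1/(2N))·Σ_{i,j∈E₊, i+j=Nk} ω_i·ω_j + (1/N)·Σ_{i∈E₊, i+Nk∈E₊} i·t_i·ω_{i+Nk}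
     + (1/(2N))·Σ_{i,j∈E₊, i+j=-Nk} i·j·t_i·t_j)·c`. -/
theorem expAd_Omega_Bel
    (N : ℕ) (hN : 0 < N) (E : Set ℤ)
    (hEneg : ∀ j : ℤ, j ∈ E ↔ -j ∈ E)
    (hEdvd : ∀ j ∈ E, ¬ ((N : ℤ) ∣ j))
    (hEadd : ∀ j ∈ E, j + (N : ℤ) ∈ E)
    {L : Type*} [LieRing L] [LieAlgebra ℂ L]
    (c : L) (hc : ∀ x : L, ⁅c, x⁆ = 0)
    (Lam : ℤ → L) (d : ℤ → L)
    (hLam : ∀ i ∈ E, ∀ j ∈ E, ⁅Lam i, Lam j⁆ = (if i + j = 0 then (i : ℂ) else 0) • c)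
    (hdLam : ∀ (k : ℤ), ∀ j ∈ E, ⁅d k, Lam j⁆ = (-(j : ℂ) / (N : ℂ)) • Lam (j + (N : ℤ) * k))
    (hdd : ∀ k l : ℤ, ⁅d k, d l⁆ = ((k - l : ℤ) : ℂ) • d (k + l))
    (t : ℤ → ℂ) (ht : (Function.support t).Finite)
    (w : ℤ → ℂ) (hw : (Function.support w).Finite)
    (k : ℤ) :
    ⁅OmEl E Lam w, ⁅OmEl E Lam w, ⁅OmEl E Lam w, Bel N E c Lam d t k⁆⁆⁆ = 0 ∧
    Bel N E c Lam d t k + ⁅OmEl E Lam w, Bel N E c Lam d t k⁆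
        + (2 : ℂ)⁻¹ • ⁅OmEl E Lam w, ⁅OmEl E Lam w, Bel N E c Lam d t k⁆⁆
      = d k
        - (N : ℂ)⁻¹ • (∑ᶠ i ∈ {i : ℤ | i ∈ E ∧ 0 < i},
            (w i • Lam ((N : ℤ) * k - i) + ((i : ℂ) * t i) • Lam ((N : ℤ) * k + i)))
        + ((2 * (N : ℂ))⁻¹ *
              (∑ᶠ p ∈ {p : ℤ × ℤ | (p.1 ∈ E ∧ 0 < p.1) ∧ (p.2 ∈ E ∧ 0 < p.2)
                  ∧ p.1 + p.2 = (N : ℤ) * k}, w p.1 * w p.2)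
            + (N : ℂ)⁻¹ *
              (∑ᶠ i ∈ {i : ℤ | (i ∈ E ∧ 0 < i)
                  ∧ (i + (N : ℤ) * k ∈ E ∧ 0 < i + (N : ℤ) * k)},
                (i : ℂ) * t i * w (i + (N : ℤ) * k))
            + (2 * (N : ℂ))⁻¹ *
              (∑ᶠ p ∈ {p : ℤ × ℤ | (p.1 ∈ E ∧ 0 < p.1) ∧ (p.2 ∈ E ∧ 0 < p.2)
                  ∧ p.1 + p.2 = -((N : ℤ) * k)},
                (p.1 : ℂ) * (p.2 : ℂ) * t p.1 * t p.2)) • c := by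
  classical
  have hNE : (N : ℂ) ≠ 0 := Nat.cast_ne_zero.2 hN.ne'
  -- E is closed under adding N·m for any integer m
  have hsubN : ∀ x ∈ E, x - (N : ℤ) ∈ E := by
    intro x hx
    have h1 : -x + (N : ℤ) ∈ E := hEadd _ ((hEneg x).1 hx)
    exact (hEneg (x - N)).2 (by simpa [neg_sub, sub_eq_neg_add] using h1)
  have hE' : ∀ j ∈ E, ∀ m : ℤ, j + (N : ℤ) * m ∈ E := by
    intro j hj m
    induction m using Int.induction_on with
    | zero => simpa using hj
    | succ m ih =>
        have h2 : j + (N : ℤ) * ((m : ℤ) + 1) = (j + (N : ℤ) * (m : ℤ)) + N := by ring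
        rw [h2]; exact hEadd _ ih
    | pred m ih =>
        have h2 : j + (N : ℤ) * (-(m : ℤ) - 1) = (j + (N : ℤ) * (-(m : ℤ))) - N := by ring
        rw [h2]; exact hsubN _ ih
  have hE'' : ∀ j ∈ E, (N : ℤ) * k - j ∈ E := by
    intro j hj
    have h := hE' (-j) ((hEneg j).1 hj) k
    rwa [show -j + (N : ℤ) * k = (N : ℤ) * k - j by ring] at h
  set A : Finset ℤ := hw.toFinset.filter (fun j => j ∈ E ∧ 0 < j) with hA
  set B : Finset ℤ := ht.toFinset.filter (fun j => j ∈ E ∧ 0 < j) with hBdef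
  have hAmem : ∀ j : ℤ, j ∈ A ↔ w j ≠ 0 ∧ j ∈ E ∧ 0 < j := by
    intro j; simp [hA, Set.Finite.mem_toFinset, Function.mem_support]
  have hBmem : ∀ j : ℤ, j ∈ B ↔ t j ≠ 0 ∧ j ∈ E ∧ 0 < j := by
    intro j; simp [hBdef, Set.Finite.mem_toFinset, Function.mem_support]
  set Om : L := OmEl E Lam w with hOmdef
  set ΛA : L := ∑ j ∈ A, w j • Lam ((N : ℤ) * k - j) with hΛA
  set ΛB : L := ∑ i ∈ B, ((i : ℂ) * t i) • Lam (i + (N : ℤ) * k) with hΛB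
  set S0 : ℂ := ∑ p ∈ (B ×ˢ B).filter (fun p => p.1 + p.2 = -((N : ℤ) * k)),
      (p.1 : ℂ) * (p.2 : ℂ) * t p.1 * t p.2 with hS0
  set S1 : ℂ := ∑ p ∈ (A ×ˢ A).filter (fun p => p.1 + p.2 = (N : ℤ) * k),
      w p.1 * w p.2 with hS1
  set S2 : ℂ := ∑ i ∈ B, (if i + (N : ℤ) * k ∈ A then (i : ℂ) * t i * w (i + (N : ℤ) * k)
      else 0) with hS2
  -- Ω as a finite sum
  have hOm : Om = ∑ j ∈ A, (w j / (j : ℂ)) • Lam (-j) := by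
    rw [hOmdef, OmEl]
    apply my_finsum_eq_sum
    intro x hx
    have hwx : w x ≠ 0 := by intro h0; exact hx (by simp [h0])
    simp [hAmem, hwx]
  -- the finsums appearing in B_k and in the target, as finite sums
  have hRB : (∑ᶠ i ∈ {i : ℤ | i ∈ E ∧ 0 < i}, ((i : ℂ) * t i) • Lam (i + (N : ℤ) * k))
      = ΛB := by
    rw [hΛB]
    apply my_finsum_eq_sum
    intro x hx
    have htx : t x ≠ 0 := by intro h0; exact hx (by simp [h0])
    simp [hBmem, htx]
  have hR0 : (∑ᶠ p ∈ {p : ℤ × ℤ | (p.1 ∈ E ∧ 0 < p.1) ∧ (p.2 ∈ E ∧ 0 < p.2)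
      ∧ p.1 + p.2 = -((N : ℤ) * k)}, (p.1 : ℂ) * (p.2 : ℂ) * t p.1 * t p.2) = S0 := by
    rw [hS0]
    apply my_finsum_eq_sum
    intro p hp
    have h1 : t p.1 ≠ 0 := by intro h0; exact hp (by simp [h0])
    have h2 : t p.2 ≠ 0 := by intro h0; exact hp (by simp [h0])
    simp [hBmem, h1, h2, Finset.mem_filter, Finset.mem_product]
    tauto
  have hBel : Bel N E c Lam d t k = d k - (N : ℂ)⁻¹ • ΛB + ((2 * (N : ℂ))⁻¹ * S0) • c := by
    rw [Bel, hRB, hR0]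
  -- brackets with c vanish
  have hxc : ∀ (x : L) (s : ℂ), ⁅x, s • c⁆ = 0 := by
    intro x s
    rw [lie_smul, ← lie_skew, hc, neg_zero, smul_zero]
  -- [Ω, d k]
  have hOmd : ⁅Om, d k⁆ = -((N : ℂ)⁻¹ • ΛA) := by
    rw [hOm, my_sum_lie, hΛA, Finset.smul_sum, ← my_sum_neg]
    apply Finset.sum_congr rfl
    intro j hj
    obtain ⟨hwj, hjE, hjpos⟩ := (hAmem j).1 hj
    have hjC : (j : ℂ) ≠ 0 := Int.cast_ne_zero.2 (by omega)
    rw [smul_lie, ← lie_skew, hdLam k (-j) ((hEneg j).1 hjE),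
      show -j + (N : ℤ) * k = (N : ℤ) * k - j by ring]
    rw [smul_neg]
    congr 1
    rw [smul_smul, smul_smul]
    congr 1
    push_cast
    field_simp
  -- [Ω, ΛB]
  have hOmΛB : ⁅Om, ΛB⁆ = (-S2) • c := by
    rw [hOm, hΛB, my_sum_lie]
    have step : ∀ j ∈ A, ⁅(w j / (j : ℂ)) • Lam (-j),
        ∑ i ∈ B, ((i : ℂ) * t i) • Lam (i + (N : ℤ) * k)⁆
        = ∑ i ∈ B, (if j = i + (N : ℤ) * k then -((i : ℂ) * t i * w (i + (N : ℤ) * k))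
            else 0) • c := by
      intro j hj
      obtain ⟨hwj, hjE, hjpos⟩ := (hAmem j).1 hj
      have hjC : (j : ℂ) ≠ 0 := Int.cast_ne_zero.2 (by omega)
      rw [smul_lie, my_lie_sum, Finset.smul_sum]
      apply Finset.sum_congr rfl
      intro i hi
      obtain ⟨hti, hiE, hipos⟩ := (hBmem i).1 hi
      rw [lie_smul, hLam (-j) ((hEneg j).1 hjE) (i + (N : ℤ) * k) (hE' i hiE k)]
      by_cases hji : j = i + (N : ℤ) * k
      · have hc1 : -j + (i + (N : ℤ) * k) = 0 := by omega
        rw [if_pos hc1, if_pos hji]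
        rw [smul_smul, smul_smul]
        congr 1
        rw [← hji]
        push_cast
        rw [show w j / (j : ℂ) * ((i : ℂ) * t i) * -(j : ℂ)
            = -((w j / (j : ℂ) * (j : ℂ)) * ((i : ℂ) * t i)) from by ring,
          div_mul_cancel₀ _ hjC]
        ring
      · have hc1 : ¬(-j + (i + (N : ℤ) * k) = 0) := by omega
        rw [if_neg hc1, if_neg hji]
        simp
    rw [Finset.sum_congr rfl step]
    have swap : ∀ j ∈ A, (∑ i ∈ B, (if j = i + (N : ℤ) * k
        then -((i : ℂ) * t i * w (i + (N : ℤ) * k)) else 0) • c)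
        = (∑ i ∈ B, if j = i + (N : ℤ) * k
            then -((i : ℂ) * t i * w (i + (N : ℤ) * k)) else 0) • c := by
      intro j _; rw [Finset.sum_smul]
    rw [Finset.sum_congr rfl swap, ← Finset.sum_smul]
    congr 1
    rw [Finset.sum_comm, hS2, ← my_sum_neg]
    apply Finset.sum_congr rfl
    intro i _
    rw [Finset.sum_ite_eq' A (i + (N : ℤ) * k)
      (fun _ => -((i : ℂ) * t i * w (i + (N : ℤ) * k)))]
    by_cases h : i + (N : ℤ) * k ∈ A <;> simp [h]
  -- [Ω, ΛA]
  have hOmΛA : ⁅Om, ΛA⁆ = (-S1) • c := by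
    rw [hOm, hΛA, my_sum_lie]
    have step : ∀ i ∈ A, ⁅(w i / (i : ℂ)) • Lam (-i),
        ∑ j ∈ A, w j • Lam ((N : ℤ) * k - j)⁆
        = ∑ j ∈ A, (if i + j = (N : ℤ) * k then -(w i * w j) else 0) • c := by
      intro i hi
      obtain ⟨hwi, hiE, hipos⟩ := (hAmem i).1 hi
      have hiC : (i : ℂ) ≠ 0 := Int.cast_ne_zero.2 (by omega)
      rw [smul_lie, my_lie_sum, Finset.smul_sum]
      apply Finset.sum_congr rfl
      intro j hj
      obtain ⟨hwj, hjE, hjpos⟩ := (hAmem j).1 hj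
      rw [lie_smul, hLam (-i) ((hEneg i).1 hiE) ((N : ℤ) * k - j) (hE'' j hjE)]
      by_cases hij : i + j = (N : ℤ) * k
      · have hc1 : -i + ((N : ℤ) * k - j) = 0 := by omega
        rw [if_pos hc1, if_pos hij]
        rw [smul_smul, smul_smul]
        congr 1
        push_cast
        field_simp
      · have hc1 : ¬(-i + ((N : ℤ) * k - j) = 0) := by omega
        rw [if_neg hc1, if_neg hij]
        simp
    rw [Finset.sum_congr rfl step]
    have swap : ∀ i ∈ A, (∑ j ∈ A, (if i + j = (N : ℤ) * k then -(w i * w j) else 0) • c)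
        = (∑ j ∈ A, if i + j = (N : ℤ) * k then -(w i * w j) else 0) • c := by
      intro i _; rw [Finset.sum_smul]
    rw [Finset.sum_congr rfl swap, ← Finset.sum_smul]
    congr 1
    rw [hS1]
    conv_rhs => rw [Finset.sum_filter, Finset.sum_product]
    rw [← my_sum_neg]
    apply Finset.sum_congr rfl
    intro i _
    rw [← my_sum_neg]
    apply Finset.sum_congr rfl
    intro j _
    by_cases h : i + j = (N : ℤ) * k <;> simp [h]
  -- first bracket
  have hbr1 : ⁅Om, Bel N E c Lam d t k⁆
      = -((N : ℂ)⁻¹ • ΛA) + ((N : ℂ)⁻¹ * S2) • c := by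
    rw [hBel, lie_add, lie_sub, lie_smul, hOmd, hOmΛB, hxc]
    rw [smul_smul]
    module
  -- second bracket
  have hbr2 : ⁅Om, ⁅Om, Bel N E c Lam d t k⁆⁆ = ((N : ℂ)⁻¹ * S1) • c := by
    rw [hbr1, lie_add, lie_neg, lie_smul, hOmΛA, hxc]
    rw [smul_smul]
    module
  constructor
  · rw [hbr2, hxc]
  -- conversions of the RHS finsums
  have hR1 : (∑ᶠ i ∈ {i : ℤ | i ∈ E ∧ 0 < i},
      (w i • Lam ((N : ℤ) * k - i) + ((i : ℂ) * t i) • Lam ((N : ℤ) * k + i)))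
      = ΛA + ΛB := by
    rw [finsum_mem_add_distrib'
      (Set.Finite.subset hw (by
        intro x hx
        simp only [Function.mem_support] at hx ⊢
        intro h0; exact hx.2 (by simp [h0])))
      (Set.Finite.subset ht (by
        intro x hx
        simp only [Function.mem_support] at hx ⊢
        intro h0; exact hx.2 (by simp [h0])))]
    congr 1
    · rw [hΛA]
      apply my_finsum_eq_sum
      intro x hx
      have hwx : w x ≠ 0 := by intro h0; exact hx (by simp [h0])
      simp [hAmem, hwx]
    · rw [hΛB]
      have : ∀ i ∈ B, ((i : ℂ) * t i) • Lam (i + (N : ℤ) * k)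
          = ((i : ℂ) * t i) • Lam ((N : ℤ) * k + i) := by
        intro i _; rw [add_comm]
      rw [Finset.sum_congr rfl this]
      apply my_finsum_eq_sum
      intro x hx
      have htx : t x ≠ 0 := by intro h0; exact hx (by simp [h0])
      simp [hBmem, htx]
  have hR2 : (∑ᶠ p ∈ {p : ℤ × ℤ | (p.1 ∈ E ∧ 0 < p.1) ∧ (p.2 ∈ E ∧ 0 < p.2)
      ∧ p.1 + p.2 = (N : ℤ) * k}, w p.1 * w p.2) = S1 := by
    rw [hS1]
    apply my_finsum_eq_sum
    intro p hp
    have h1 : w p.1 ≠ 0 := by intro h0; exact hp (by simp [h0])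
    have h2 : w p.2 ≠ 0 := by intro h0; exact hp (by simp [h0])
    simp [hAmem, h1, h2, Finset.mem_filter, Finset.mem_product]
    tauto
  have hR3 : (∑ᶠ i ∈ {i : ℤ | (i ∈ E ∧ 0 < i)
      ∧ (i + (N : ℤ) * k ∈ E ∧ 0 < i + (N : ℤ) * k)},
      (i : ℂ) * t i * w (i + (N : ℤ) * k)) = S2 := by
    rw [hS2, ← Finset.sum_filter]
    apply my_finsum_eq_sum
    intro x hx
    have htx : t x ≠ 0 := by intro h0; exact hx (by simp [h0])
    have hwx : w (x + (N : ℤ) * k) ≠ 0 := by intro h0; exact hx (by simp [h0])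
    simp [hAmem, hBmem, htx, hwx, Finset.mem_filter]
  rw [hbr2, hbr1, hBel, hR1, hR2, hR3, hR0]
  have h2N : (2 * (N : ℂ))⁻¹ = 2⁻¹ * (N : ℂ)⁻¹ := by
    rw [mul_inv]
  rw [h2N]
  module
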